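/- For a small category D, an object d of D, and any category M, the inclusion functor from p_i^{-1}(d) into the comma category d ↓ p_i is initial: for every functor X : d ↓ p_i → M, the limit of X exists if and only if the limit of its restriction to p_i^{-1}(d) exists, and in that case they agree. -/

import Mathlib

open CategoryTheory Limits
universe u

namespace SCat

variable (D : Type u) [SmallCategory D]

lemma monotone_functor_comp {P Q R : Type*} [Preorder P] [Preorder Q] [Preorder R]
    (f : P →o Q) (g : Q →o R) :
    (g.comp f).monotone.functor = f.monotone.functor ⋙ g.monotone.functor := by
  refine CategoryTheory.Functor.ext (fun _ => rfl) ?_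
  intros
  apply Subsingleton.elim

lemma monotone_functor_id {P : Type*} [Preorder P] :
    (OrderHom.id : P →o P).monotone.functor = 𝟭 P := by
  refine CategoryTheory.Functor.ext (fun _ => rfl) ?_
  intros
  apply Subsingleton.elim

/-- The (opposite) category of simplices `Δᵒᵖ D` of a small category `D`: objects
are paths (functors `[n] ⥤ D`). -/
structure SimplexOfCat where
  n : ℕ
  F : ComposableArrows D n

variable {D}

/-- A morphism `X ⟶ Y` in `Δᵒᵖ D` is a simplicial operator `[Y.n] → [X.n]`
commuting with the functors to `D`. -/
instance : Category (SimplexOfCat D) where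
  Hom X Y := {α : Fin (Y.n + 1) →o Fin (X.n + 1) // Y.F = α.monotone.functor ⋙ X.F}
  id X := ⟨OrderHom.id, by rw [monotone_functor_id]; rfl⟩
  comp {X Y Z} f g := ⟨f.1.comp g.1, by
    rw [monotone_functor_comp, Functor.assoc, ← f.2, ← g.2]⟩
  id_comp f := Subtype.ext (OrderHom.ext _ _ rfl)
  comp_id f := Subtype.ext (OrderHom.ext _ _ rfl)
  assoc f g h := Subtype.ext (OrderHom.ext _ _ rfl)

variable (D)

/-- The initial-vertex functor `p_i : Δᵒᵖ D ⥤ D`, sending a path to its first vertex. -/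
def pInit : SimplexOfCat D ⥤ D where
  obj X := X.F.obj 0
  map {X Y} f :=
    X.F.map (homOfLE (Fin.zero_le _) : (0 : Fin (X.n + 1)) ⟶ f.1 0) ≫
      eqToHom (congrArg (fun G => G.obj (0 : Fin (Y.n + 1))) f.2).symm
  map_id X := by
    have key : ∀ (i : Fin (X.n + 1)) (hi : i = 0) (h : 0 ≤ i) (e : X.F.obj i = X.F.obj 0),
        X.F.map (homOfLE h) ≫ eqToHom e = 𝟙 _ := by
      rintro i rfl h e
      simp
    exact key _ rfl _ _
  map_comp {X Y Z} f g := by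
    have h := Functor.congr_hom f.2
      (homOfLE (Fin.zero_le (g.1 0)) : (0 : Fin (Y.n + 1)) ⟶ g.1 0)
    have key : ∀ (i k : Fin (X.n + 1)) (a : 0 ⟶ k) (b : 0 ⟶ i) (c : i ⟶ k) (W V U : D)
        (e1 : X.F.obj k = W) (e2 : X.F.obj i = V) (e3 : V = X.F.obj i) (e4 : X.F.obj k = U)
        (e5 : U = W),
        X.F.map a ≫ eqToHom e1 =
          (X.F.map b ≫ eqToHom e2) ≫ (eqToHom e3 ≫ X.F.map c ≫ eqToHom e4) ≫ eqToHom e5 := by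
      intro i k a b c W V U e1 e2 e3 e4 e5
      subst e5 e1 e2
      simp only [eqToHom_refl, Category.id_comp, Category.comp_id, ← X.F.map_comp]
      exact congrArg X.F.map (Subsingleton.elim _ _)
    rw [h]
    exact key _ _ _ _ _ _ _ _ _ _ _ _ _

end SCat

namespace SCat

variable (D : Type u) [SmallCategory D]

/-- An object of the fiber `p_i⁻¹(d)`: a path `[n] ⥤ D` whose first vertex is `d`. -/
structure PIFiber (d : D) where
  n : ℕ
  F : ComposableArrows D n
  first_eq : F.obj 0 = d

variable {D}

/-- Morphisms of `p_i⁻¹(d)`: simplicial operators preserving the bottom element and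
commuting with the functors to `D`. -/
instance (d : D) : Category (PIFiber D d) where
  Hom X Y := {α : Fin (Y.n + 1) →o Fin (X.n + 1) //
    α 0 = 0 ∧ Y.F = α.monotone.functor ⋙ X.F}
  id X := ⟨OrderHom.id, rfl, by rw [monotone_functor_id]; rfl⟩
  comp {X Y Z} f g := ⟨f.1.comp g.1, by simp [f.2.1, g.2.1], by
    rw [monotone_functor_comp, Functor.assoc, ← f.2.2, ← g.2.2]⟩
  id_comp f := Subtype.ext (OrderHom.ext _ _ rfl)
  comp_id f := Subtype.ext (OrderHom.ext _ _ rfl)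
  assoc f g h := Subtype.ext (OrderHom.ext _ _ rfl)

/-- The inclusion of the fiber `p_i⁻¹(d)` into the comma category `d ↓ p_i`. -/
def fiberIncl (d : D) : PIFiber D d ⥤ StructuredArrow d (pInit D) where
  obj X := StructuredArrow.mk (Y := SimplexOfCat.mk X.n X.F) (eqToHom X.first_eq.symm)
  map {X Y} f := StructuredArrow.homMk ⟨f.1, f.2.2⟩ (by
    have h0 : f.1 0 = 0 := f.2.1
    dsimp [pInit]
    rw [show (homOfLE _ : (0 : Fin (X.n + 1)) ⟶ f.1 0) = eqToHom (by rw [h0]) from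
      Subsingleton.elim _ _]
    simp [eqToHom_map]
    exact eqToHom_trans _ _)
  map_id X := by
    apply StructuredArrow.hom_ext
    apply Subtype.ext
    rfl
  map_comp f g := by
    apply StructuredArrow.hom_ext
    apply Subtype.ext
    rfl

end SCat

namespace SCat

variable {D : Type u} [SmallCategory D] {d : D}

lemma map_homOfLE_congr {C : Type*} [Category C] {m : ℕ} (F : Fin m ⥤ C) {x y x' y' : Fin m}
    (hx : x = x') (hy : y = y') (h : x ≤ y) (h' : x' ≤ y') :
    F.map (homOfLE h) = eqToHom (by rw [hx]) ≫ F.map (homOfLE h') ≫ eqToHom (by rw [hy]) := by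
  subst hx hy
  simp

/-- The successor map as an order hom. -/
def succOH (n : ℕ) : Fin (n + 1) →o Fin (n + 2) :=
  ⟨Fin.succ, fun _ _ h => Fin.succ_le_succ_iff.mpr h⟩

lemma precomp_map_zero_eq {C : Type*} [Category C] {n : ℕ} {X : C}
    (F : ComposableArrows C n) (f : X ⟶ F.left)
    {j : Fin (n + 2)} (hj : j = 1) (h : (0 : Fin (n + 2)) ≤ j) :
    ComposableArrows.Precomp.map F f 0 j h =
      f ≫ eqToHom (show ComposableArrows.Precomp.obj F X 1 =
        ComposableArrows.Precomp.obj F X j by rw [hj]) := by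
  subst hj
  simp
  exact (Category.comp_id f).symm

/-- The object of the fiber obtained by prepending `c.hom` to the path `c.right`. -/
def targetObj (c : StructuredArrow d (pInit D)) : PIFiber D d where
  n := c.right.n + 1
  F := c.right.F.precomp c.hom
  first_eq := rfl

lemma succ_comp (c : StructuredArrow d (pInit D)) :
    c.right.F = (succOH c.right.n).monotone.functor ⋙ c.right.F.precomp c.hom := by
  refine CategoryTheory.Functor.ext (fun i => rfl) (fun i j g => ?_)
  show _ = 𝟙 _ ≫ _ ≫ 𝟙 _
  rw [Category.id_comp]
  exact (Category.comp_id _).symm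

/-- The canonical simplex morphism from the prepended path to `c.right`. -/
def canSimplex (c : StructuredArrow d (pInit D)) :
    SimplexOfCat.mk (c.right.n + 1) (c.right.F.precomp c.hom) ⟶ c.right :=
  ⟨succOH c.right.n, succ_comp c⟩

/-- The canonical structured-arrow morphism from the inclusion of `targetObj c` to `c`. -/
def canHom (c : StructuredArrow d (pInit D)) :
    (fiberIncl d).obj (targetObj c) ⟶ c := by
  refine StructuredArrow.homMk (canSimplex c) ?_
  dsimp [fiberIncl, targetObj, pInit, canSimplex]
  exact (Category.id_comp _).trans (Category.comp_id _)

/-- The fiber morphism from `b` to `targetObj c` induced by a structured-arrow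
morphism `(fiberIncl d).obj b ⟶ c`. -/
def gammaHom (c : StructuredArrow d (pInit D)) (b : PIFiber D d)
    (f : (fiberIncl d).obj b ⟶ c) : b ⟶ targetObj c := by
  have hαF : c.right.F = f.right.1.monotone.functor ⋙ b.F := f.right.2
  have hw : c.hom = eqToHom b.first_eq.symm ≫
      (b.F.map (homOfLE (Fin.zero_le (f.right.1 0))) ≫
        eqToHom (congrArg (fun G => G.obj (0 : Fin (c.right.n + 1))) hαF).symm) := by
    rw [← StructuredArrow.w f]
    rfl
  refine ⟨⟨Fin.cases 0 f.right.1, ?_⟩, ?_, ?_⟩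
  · intro i j hij
    induction i using Fin.cases with
    | zero => exact Fin.zero_le _
    | succ i =>
      induction j using Fin.cases with
      | zero =>
        exact absurd (Fin.le_antisymm hij (Fin.zero_le _)) (Fin.succ_ne_zero i)
      | succ j =>
        exact f.right.1.monotone (Fin.succ_le_succ_iff.mp hij)
  · show (Fin.cases 0 f.right.1 (0 : Fin (c.right.n + 2)) : Fin (b.n + 1)) = 0
    rfl
  · -- (targetObj c).F = (Fin.cases 0 α) ⋙ b.F
    refine ComposableArrows.ext (fun i => ?_) (fun i hi => ?_)
    · induction i using Fin.cases with
      | zero => exact b.first_eq.symm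
      | succ i =>
        exact Functor.congr_obj hαF i
    · have hi' : i < c.right.n + 1 := hi
      obtain _ | i := i
      · -- first map is `c.hom`
        have h0 : ((targetObj c).F).map' 0 1 (by omega) (by omega) = c.hom := rfl
        rw [h0, hw]
        dsimp only [ComposableArrows.map', Monotone.functor, OrderHom.coe_mk,
          Functor.comp_map]
        rfl
      · -- later maps come from `hαF`
        have p : (⟨i, by omega⟩ : Fin (c.right.n + 1)) ≤ ⟨i + 1, by omega⟩ := by
          simp [Fin.le_def]
        have h1 : ((targetObj c).F).map' (i + 1) (i + 2) (by omega) (by omega) =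
            c.right.F.map (homOfLE p) := rfl
        rw [h1, Functor.congr_hom hαF (homOfLE p)]
        dsimp only [ComposableArrows.map', Monotone.functor, OrderHom.coe_mk,
          Functor.comp_map]
        rfl

/-- Any object of `CostructuredArrow (fiberIncl d) c` maps to the canonical one. -/
def toTarget (c : StructuredArrow d (pInit D))
    (j : CostructuredArrow (fiberIncl d) c) : j ⟶ CostructuredArrow.mk (canHom c) := by
  refine CostructuredArrow.homMk (gammaHom c j.left j.hom) ?_
  apply StructuredArrow.hom_ext
  apply Subtype.ext
  apply OrderHom.ext
  funext i
  show (Fin.cases 0 j.hom.right.1 (Fin.succ i) : Fin (j.left.n + 1)) = j.hom.right.1 i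
  rfl

lemma fiberIncl_initial : (fiberIncl (D := D) d).Initial := by
  constructor
  intro c
  have : Nonempty (CostructuredArrow (fiberIncl d) c) := ⟨CostructuredArrow.mk (canHom c)⟩
  apply zigzag_isConnected
  intro j₁ j₂
  exact Relation.ReflTransGen.trans
    (Relation.ReflTransGen.single (Or.inl ⟨toTarget c j₁⟩))
    (Relation.ReflTransGen.single (Or.inr ⟨toTarget c j₂⟩))

end SCat

open SCat in
/-- The inclusion of the fiber `p_i⁻¹(d)` into the comma category
`d ↓ p_i` is initial: for every functor `X : d ↓ p_i ⥤ M`, the limit of `X` exists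
iff the limit of its restriction along the inclusion exists, and in that case they
agree. -/
theorem stmt2 (D : Type u) [SmallCategory D] (d : D) :
    (fiberIncl (D := D) d).Initial ∧
      ∀ (M : Type (u + 1)) [Category.{u} M] (X : StructuredArrow d (pInit D) ⥤ M),
        (HasLimit X ↔ HasLimit (fiberIncl d ⋙ X)) ∧
        (∀ (h₁ : HasLimit X) (h₂ : HasLimit (fiberIncl d ⋙ X)),
          letI := h₁
          letI := h₂
          Nonempty ((limit (fiberIncl d ⋙ X)) ≅ limit X)) := by
  have hinit : (fiberIncl (D := D) d).Initial := fiberIncl_initial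
  refine ⟨hinit, fun M _ X => ⟨⟨fun h₁ => inferInstance,
    fun h₂ => Functor.Initial.hasLimit_of_comp (fiberIncl d)⟩, fun h₁ h₂ => ?_⟩⟩
  exact ⟨Functor.Initial.limitIso (fiberIncl d) X⟩
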